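/- Let u, v : (0,∞) → ℝ belong to W^{1,1}_0(0,∞) (i.e. u, v and their weak derivatives are integrable on (0,∞) and u(0)=v(0)=0), extended by zero to (-∞,0]. If the functions x ↦ D⁻_μ v(x) and x ↦ D⁺_μ u(x) belong to L¹(0,∞), then the integration by parts formula holds: ∫_0^∞ u(x) (D⁻_μ v(x)) dx = ∫_0^∞ (D⁺_μ u(x)) v(x) dx. -/

import Mathlib

open MeasureTheory Real Set Filter Topology
open scoped ENNReal NNReal

lemma meas_of_zero (f : ℝ → ℝ) (h0 : ∀ x ≤ (0:ℝ), f x = 0)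
    (hc : ContinuousOn f (Ioi 0)) : Measurable f := by
  classical
  have hf : f = (Ioi (0:ℝ)).piecewise f (fun _ => 0) := by
    funext x
    by_cases hx : x ∈ Ioi (0:ℝ)
    · simp [Set.piecewise_eq_of_mem _ _ _ hx]
    · simp [Set.piecewise_eq_of_notMem _ _ _ hx, h0 x (le_of_not_gt hx)]
  rw [hf]
  exact hc.measurable_piecewise continuousOn_const measurableSet_Ioi

lemma ftc (f f' : ℝ → ℝ) (hd : ∀ x ∈ Ioi (0:ℝ), HasDerivAt f (f' x) x)
    (hint : IntegrableOn f' (Ioi 0)) {a b : ℝ} (ha : 0 < a) (hab : a ≤ b) :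
    f b - f a = ∫ s in Ioc a b, f' s := by
  have h1 : ∀ x ∈ uIcc a b, HasDerivAt f (f' x) x := by
    intro x hx
    rw [uIcc_of_le hab] at hx
    exact hd x (lt_of_lt_of_le ha hx.1)
  have h2 : IntervalIntegrable f' volume a b := by
    rw [intervalIntegrable_iff]
    refine hint.mono_set ?_
    rw [uIoc_of_le hab]
    exact fun x hx => lt_trans ha hx.1
  rw [← intervalIntegral.integral_eq_sub_of_hasDerivAt h1 h2,
    intervalIntegral.integral_of_le hab]

lemma bdd (f f' : ℝ → ℝ) (h0 : ∀ x ≤ (0:ℝ), f x = 0)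
    (hd : ∀ x ∈ Ioi (0:ℝ), HasDerivAt f (f' x) x)
    (hint : IntegrableOn f' (Ioi 0)) :
    ∀ x, |f x| ≤ |f 1| + ∫ s in Ioi (0:ℝ), |f' s| := by
  have hnn : 0 ≤ ∫ s in Ioi (0:ℝ), |f' s| := integral_nonneg fun s => abs_nonneg _
  have key : ∀ a b : ℝ, 0 < a → a ≤ b → |f b - f a| ≤ ∫ s in Ioi (0:ℝ), |f' s| := by
    intro a b ha hab
    rw [ftc f f' hd hint ha hab]
    calc |∫ s in Ioc a b, f' s| ≤ ∫ s in Ioc a b, |f' s| := by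
          simpa using norm_integral_le_integral_norm (μ := volume.restrict (Ioc a b)) f'
      _ ≤ ∫ s in Ioi (0:ℝ), |f' s| := by
          apply setIntegral_mono_set hint.abs
          · exact ae_of_all _ fun s => abs_nonneg _
          · exact HasSubset.Subset.eventuallyLE fun x hx => lt_trans ha hx.1
  intro x
  rcases le_or_gt x 0 with hx | hx
  · rw [h0 x hx]
    simpa using add_nonneg (abs_nonneg (f 1)) hnn
  · have : |f x| ≤ |f 1| + |f x - f 1| := by
      calc |f x| = |f 1 + (f x - f 1)| := by ring_nf
        _ ≤ |f 1| + |f x - f 1| := abs_add_le _ _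
    refine this.trans (add_le_add_right ?_ _)
    rcases le_or_gt x 1 with h1 | h1
    · rw [abs_sub_comm]
      exact key x 1 hx h1
    · exact key 1 x one_pos h1.le

lemma shift_bound (f f' g' : ℝ → ℝ) (hg'm : Measurable g')
    (hae : f' =ᵐ[volume.restrict (Ioi 0)] g')
    (hd : ∀ x ∈ Ioi (0:ℝ), HasDerivAt f (f' x) x)
    (hint : IntegrableOn f' (Ioi 0)) {y : ℝ} (hy : 0 < y) :
    ∫⁻ x in Ioi (0:ℝ), (‖f (x + y) - f x‖₊ : ℝ≥0∞) ≤
      ENNReal.ofReal y * ∫⁻ s in Ioi (0:ℝ), (‖f' s‖₊ : ℝ≥0∞) := by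
  have hgg : ∫⁻ s in Ioi (0:ℝ), (‖f' s‖₊ : ℝ≥0∞) = ∫⁻ s in Ioi (0:ℝ), (‖g' s‖₊ : ℝ≥0∞) :=
    lintegral_congr_ae (hae.mono fun s hs => by simp only [hs])
  rw [hgg]
  -- pointwise bound
  have hpt : ∀ x ∈ Ioi (0:ℝ), (‖f (x + y) - f x‖₊ : ℝ≥0∞) ≤
      ∫⁻ s in Ioc x (x + y), (‖g' s‖₊ : ℝ≥0∞) := by
    intro x hx
    have hxy : x ≤ x + y := le_add_of_nonneg_right hy.le
    rw [ftc f f' hd hint hx hxy]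
    calc (‖∫ s in Ioc x (x+y), f' s‖₊ : ℝ≥0∞) ≤ ∫⁻ s in Ioc x (x+y), (‖f' s‖₊ : ℝ≥0∞) :=
        enorm_integral_le_lintegral_enorm _
      _ = _ := by
        refine lintegral_congr_ae ?_
        have : f' =ᵐ[volume.restrict (Ioc x (x+y))] g' :=
          ae_restrict_of_ae_restrict_of_subset (fun s hs => lt_trans hx hs.1) hae
        exact this.mono fun s hs => by simp only [hs]
  calc ∫⁻ x in Ioi (0:ℝ), (‖f (x + y) - f x‖₊ : ℝ≥0∞)
      ≤ ∫⁻ x in Ioi (0:ℝ), ∫⁻ s in Ioc x (x + y), (‖g' s‖₊ : ℝ≥0∞) := by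
        refine lintegral_mono_ae ((ae_restrict_iff' measurableSet_Ioi).2 (ae_of_all _ hpt))
    _ = ∫⁻ x in Ioi (0:ℝ), ∫⁻ s, (Ioc x (x+y)).indicator (fun s => (‖g' s‖₊ : ℝ≥0∞)) s := by
        exact lintegral_congr fun x => (lintegral_indicator measurableSet_Ioc (fun s => ((‖g' s‖₊ : ℝ≥0∞)))).symm
    _ = ∫⁻ s, ∫⁻ x in Ioi (0:ℝ), (Ioc x (x+y)).indicator (fun s => (‖g' s‖₊ : ℝ≥0∞)) s := by
        refine lintegral_lintegral_swap ?_
        have heq : (Function.uncurry fun x s => (Ioc x (x+y)).indicator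
            (fun s => (‖g' s‖₊ : ℝ≥0∞)) s) =
            fun p : ℝ × ℝ => {p : ℝ × ℝ | p.1 < p.2 ∧ p.2 ≤ p.1 + y}.indicator
              (fun p => (‖g' p.2‖₊ : ℝ≥0∞)) p := by
          funext p
          by_cases h : p.1 < p.2 ∧ p.2 ≤ p.1 + y <;>
            simp [Function.uncurry, Set.indicator, Set.mem_Ioc, h]
        rw [heq]
        refine Measurable.aemeasurable (Measurable.indicator ?_ ?_)
        · exact (hg'm.comp measurable_snd).nnnorm.coe_nnreal_ennreal
        · exact (measurableSet_lt measurable_fst measurable_snd).inter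
            (measurableSet_le measurable_snd (measurable_fst.add_const y))
    _ = ∫⁻ s, (‖g' s‖₊ : ℝ≥0∞) * (volume.restrict (Ioi 0)) (Ico (s - y) s) := by
        refine lintegral_congr fun s => ?_
        have : ∀ x : ℝ, (Ioc x (x+y)).indicator (fun s => (‖g' s‖₊ : ℝ≥0∞)) s =
            (Ico (s - y) s).indicator (fun _ => (‖g' s‖₊ : ℝ≥0∞)) x := by
          intro x
          have hiff : s ∈ Ioc x (x+y) ↔ x ∈ Ico (s-y) s := by
            simp only [Set.mem_Ioc, Set.mem_Ico]
            constructor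
            · rintro ⟨h1, h2⟩; exact ⟨by linarith, h1⟩
            · rintro ⟨h1, h2⟩; exact ⟨h2, by linarith⟩
          by_cases h : s ∈ Ioc x (x+y)
          · rw [Set.indicator_of_mem h, Set.indicator_of_mem (hiff.mp h)]
          · rw [Set.indicator_of_notMem h,
              Set.indicator_of_notMem (fun hc => h (hiff.mpr hc))]
        have h1 : ∫⁻ x in Ioi (0:ℝ), (Ioc x (x+y)).indicator (fun s => (‖g' s‖₊ : ℝ≥0∞)) s
            = ∫⁻ x in Ioi (0:ℝ), (Ico (s-y) s).indicator (fun _ => (‖g' s‖₊ : ℝ≥0∞)) x :=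
          lintegral_congr fun x => this x
        rw [h1, lintegral_indicator_const measurableSet_Ico]
    _ ≤ ∫⁻ s, (Ioi (0:ℝ)).indicator (fun s => ENNReal.ofReal y * (‖g' s‖₊ : ℝ≥0∞)) s := by
        refine lintegral_mono fun s => ?_
        rcases le_or_gt s 0 with hs | hs
        · have : (volume.restrict (Ioi (0:ℝ))) (Ico (s - y) s) = 0 := by
            rw [Measure.restrict_apply measurableSet_Ico]
            have : Ico (s - y) s ∩ Ioi 0 = ∅ := by
              ext x; simp only [Set.mem_inter_iff, Set.mem_Ico, Set.mem_Ioi, Set.mem_empty_iff_false,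
                iff_false, not_and]
              intro h1 h2; linarith [h1.2]
            rw [this]; simp
          rw [this, mul_zero, Set.indicator_of_notMem (by simpa using hs)]
        · rw [Set.indicator_of_mem (Set.mem_Ioi.mpr hs)]
          rw [mul_comm]
          refine mul_le_mul_left ?_ _
          calc (volume.restrict (Ioi (0:ℝ))) (Ico (s - y) s) ≤ volume (Ico (s - y) s) :=
              Measure.restrict_le_self _
            _ = ENNReal.ofReal y := by rw [Real.volume_Ico]; ring_nf
    _ = ENNReal.ofReal y * ∫⁻ s in Ioi (0:ℝ), (‖g' s‖₊ : ℝ≥0∞) := by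
        rw [lintegral_indicator measurableSet_Ioi,
          lintegral_const_mul _ (hg'm.nnnorm.coe_nnreal_ennreal)]

-- translation integrability
lemma int_shift (v : ℝ → ℝ) (hvInt : IntegrableOn v (Ioi 0)) {y : ℝ} (hy : 0 < y) :
    IntegrableOn (fun x => v (x + y)) (Ioi 0) := by
  have h1 : IntegrableOn v (Ioi y) := hvInt.mono_set (fun x hx => lt_trans hy hx)
  have h1' : Integrable ((Ioi y).indicator v) volume :=
    (integrable_indicator_iff measurableSet_Ioi).mpr h1
  refine (integrable_indicator_iff measurableSet_Ioi).mp ?_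
  have heq : (Ioi (0:ℝ)).indicator (fun x => v (x + y)) =
      ((Ioi y).indicator v) ∘ (fun x => x + y) := by
    funext x
    by_cases hx : (0:ℝ) < x
    · rw [Set.indicator_of_mem (Set.mem_Ioi.mpr hx)]
      simp only [Function.comp_apply]
      rw [Set.indicator_of_mem (Set.mem_Ioi.mpr (by linarith))]
    · rw [Set.indicator_of_notMem (by simpa using hx)]
      simp only [Function.comp_apply]
      rw [Set.indicator_of_notMem (by simp; linarith [le_of_not_gt hx])]
  rw [heq]
  exact ((measurePreserving_add_right volume y).integrable_comp_emb
    (MeasurableEquiv.addRight y).measurableEmbedding).mpr h1'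

lemma int_shift' (u : ℝ → ℝ) (hu0 : ∀ x ≤ (0:ℝ), u x = 0)
    (huInt : IntegrableOn u (Ioi 0)) {y : ℝ} (hy : 0 < y) :
    IntegrableOn (fun x => u (x - y)) (Ioi 0) := by
  refine (integrable_indicator_iff measurableSet_Ioi).mp ?_
  have heq : (Ioi (0:ℝ)).indicator (fun x => u (x - y)) =
      ((Ioi (0:ℝ)).indicator u) ∘ (fun x => x - y) := by
    funext x
    by_cases hx : (0:ℝ) < x
    · rw [Set.indicator_of_mem (Set.mem_Ioi.mpr hx)]
      simp only [Function.comp_apply, Set.indicator]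
      by_cases hxy : (0:ℝ) < x - y
      · simp [hxy]
      · simp [hxy, hu0 _ (le_of_not_gt hxy)]
    · rw [Set.indicator_of_notMem (by simpa using hx)]
      simp only [Function.comp_apply]
      rw [Set.indicator_of_notMem (by simp; linarith [le_of_not_gt hx])]
  rw [heq]
  refine ((measurePreserving_sub_right volume y).integrable_comp_emb
    (MeasurableEquiv.subRight y).measurableEmbedding).mpr ?_
  rw [integrable_indicator_iff measurableSet_Ioi]
  exact huInt

-- per-y translation identity
lemma shift_eq (u v : ℝ → ℝ) (hu0 : ∀ x ≤ (0:ℝ), u x = 0) (hv0 : ∀ x ≤ (0:ℝ), v x = 0)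
    (hum : Measurable u) (hvm : Measurable v)
    (huInt : IntegrableOn u (Ioi 0)) (hvInt : IntegrableOn v (Ioi 0))
    (Mu Mv : ℝ) (hMu : ∀ x, |u x| ≤ Mu) (hMv : ∀ x, |v x| ≤ Mv)
    {y : ℝ} (hy : 0 < y) :
    ∫ x in Ioi (0:ℝ), u x * (v x - v (x + y))
      = ∫ x in Ioi (0:ℝ), (u x - u (x - y)) * v x := by
  have hubd : ∃ C, ∀ x, ‖u x‖ ≤ C := ⟨Mu, fun x => by simpa [Real.norm_eq_abs] using hMu x⟩
  have huy_bd : ∃ C, ∀ x, ‖u (x - y)‖ ≤ C :=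
    ⟨Mu, fun x => by simpa [Real.norm_eq_abs] using hMu (x - y)⟩
  have huv : IntegrableOn (fun x => u x * v x) (Ioi 0) :=
    hvInt.bdd_mul hum.aestronglyMeasurable.restrict (ae_of_all _ hubd.choose_spec)
  have huvy : IntegrableOn (fun x => u x * v (x + y)) (Ioi 0) :=
    (int_shift v hvInt hy).bdd_mul hum.aestronglyMeasurable.restrict (ae_of_all _ hubd.choose_spec)
  have huyv : IntegrableOn (fun x => u (x - y) * v x) (Ioi 0) :=
    hvInt.bdd_mul ((hum.comp (measurable_id.sub_const y)).aestronglyMeasurable.restrict) (ae_of_all _ huy_bd.choose_spec)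
  have key : ∫ x in Ioi (0:ℝ), u x * v (x + y) = ∫ x in Ioi (0:ℝ), u (x - y) * v x := by
    have h1 : ∫ x in Ioi (0:ℝ), u x * v (x + y) = ∫ x : ℝ, u x * v (x + y) :=
      setIntegral_eq_integral_of_forall_compl_eq_zero fun x hx => by
        rw [hu0 x (le_of_not_gt (by simpa using hx)), zero_mul]
    have h2 : ∫ x in Ioi (0:ℝ), u (x - y) * v x = ∫ x : ℝ, u (x - y) * v x :=
      setIntegral_eq_integral_of_forall_compl_eq_zero fun x hx => by
        rw [hv0 x (le_of_not_gt (by simpa using hx)), mul_zero]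
    have h3 : ∫ x : ℝ, u x * v (x + y) = ∫ x : ℝ, u (x - y) * v x := by
      have := integral_add_right_eq_self (μ := volume) (fun z => u (z - y) * v z) y
      simp only [add_sub_cancel_right] at this
      exact this
    rw [h1, h2, h3]
  have hsplit1 : ∫ x in Ioi (0:ℝ), u x * (v x - v (x + y))
      = (∫ x in Ioi (0:ℝ), u x * v x) - ∫ x in Ioi (0:ℝ), u x * v (x + y) := by
    rw [← integral_sub huv huvy]
    exact setIntegral_congr_fun measurableSet_Ioi fun x _ => by ring
  have hsplit2 : ∫ x in Ioi (0:ℝ), (u x - u (x - y)) * v x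
      = (∫ x in Ioi (0:ℝ), u x * v x) - ∫ x in Ioi (0:ℝ), u (x - y) * v x := by
    rw [← integral_sub huv huyv]
    exact setIntegral_congr_fun measurableSet_Ioi fun x _ => by ring
  rw [hsplit1, hsplit2, key]

lemma lint_shift (h : ℝ → ℝ≥0∞) (y : ℝ) :
    ∫⁻ x in Ioi y, h x = ∫⁻ z in Ioi (0:ℝ), h (z + y) := by
  rw [← lintegral_indicator measurableSet_Ioi, ← lintegral_indicator measurableSet_Ioi,
    ← lintegral_add_right_eq_self (fun x => (Ioi y).indicator h x) y]
  refine lintegral_congr fun z => ?_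
  by_cases hz : (0:ℝ) < z
  · rw [Set.indicator_of_mem (Set.mem_Ioi.mpr (by linarith : y < z + y)),
      Set.indicator_of_mem (Set.mem_Ioi.mpr hz)]
  · rw [Set.indicator_of_notMem (by simp only [Set.mem_Ioi]; linarith [le_of_not_gt hz]),
      Set.indicator_of_notMem (by simpa using hz)]

/-- Integration by parts for the left and right Marchaud-type derivatives
associated with a Lévy measure `μ` on `(0,∞)`, for `u, v ∈ W^{1,1}_0(0,∞)`
extended by zero on `(-∞,0]`. -/
theorem marchaud_integration_by_parts
    (μ : Measure ℝ)
    (hμ : ∫⁻ y in Ioi (0:ℝ), ENNReal.ofReal (min 1 y) ∂μ < ⊤)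
    (u v u' v' : ℝ → ℝ)
    (hu0 : ∀ x ≤ (0:ℝ), u x = 0) (hv0 : ∀ x ≤ (0:ℝ), v x = 0)
    (huInt : IntegrableOn u (Ioi 0)) (hvInt : IntegrableOn v (Ioi 0))
    (hud : ∀ x ∈ Ioi (0:ℝ), HasDerivAt u (u' x) x)
    (hvd : ∀ x ∈ Ioi (0:ℝ), HasDerivAt v (v' x) x)
    (hu'Int : IntegrableOn u' (Ioi 0)) (hv'Int : IntegrableOn v' (Ioi 0))
    (hDv : IntegrableOn (fun x => ∫ y in Ioi (0:ℝ), (v x - v (x + y)) ∂μ) (Ioi 0))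
    (hDu : IntegrableOn (fun x => ∫ y in Ioi (0:ℝ), (u x - u (x - y)) ∂μ) (Ioi 0)) :
    ∫ x in Ioi (0:ℝ), u x * (∫ y in Ioi (0:ℝ), (v x - v (x + y)) ∂μ)
      = ∫ x in Ioi (0:ℝ), (∫ y in Ioi (0:ℝ), (u x - u (x - y)) ∂μ) * v x := by
  -- measurability
  have hum : Measurable u :=
    meas_of_zero u hu0 fun x hx => (hud x hx).continuousAt.continuousWithinAt
  have hvm : Measurable v :=
    meas_of_zero v hv0 fun x hx => (hvd x hx).continuousAt.continuousWithinAt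
  -- uniform bounds
  set Mu : ℝ := |u 1| + ∫ s in Ioi (0:ℝ), |u' s| with hMudef
  set Mv : ℝ := |v 1| + ∫ s in Ioi (0:ℝ), |v' s| with hMvdef
  have hMu : ∀ x, |u x| ≤ Mu := bdd u u' hu0 hud hu'Int
  have hMv : ∀ x, |v x| ≤ Mv := bdd v v' hv0 hvd hv'Int
  -- measurable representatives of the derivatives
  obtain ⟨gu, hgum, hguae⟩ : ∃ g : ℝ → ℝ, Measurable g ∧ u' =ᵐ[volume.restrict (Ioi 0)] g :=
    ⟨hu'Int.1.mk u', hu'Int.1.stronglyMeasurable_mk.measurable, hu'Int.1.ae_eq_mk⟩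
  obtain ⟨gv, hgvm, hgvae⟩ : ∃ g : ℝ → ℝ, Measurable g ∧ v' =ᵐ[volume.restrict (Ioi 0)] g :=
    ⟨hv'Int.1.mk v', hv'Int.1.stronglyMeasurable_mk.measurable, hv'Int.1.ae_eq_mk⟩
  -- lintegral quantities
  set Nu : ℝ≥0∞ := ∫⁻ x in Ioi (0:ℝ), (‖u x‖₊ : ℝ≥0∞) with hNudef
  set Nv : ℝ≥0∞ := ∫⁻ x in Ioi (0:ℝ), (‖v x‖₊ : ℝ≥0∞) with hNvdef
  set Gu : ℝ≥0∞ := ∫⁻ s in Ioi (0:ℝ), (‖u' s‖₊ : ℝ≥0∞) with hGudef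
  set Gv : ℝ≥0∞ := ∫⁻ s in Ioi (0:ℝ), (‖v' s‖₊ : ℝ≥0∞) with hGvdef
  have hNu : Nu < ⊤ := huInt.2
  have hNv : Nv < ⊤ := hvInt.2
  have hGu : Gu < ⊤ := hu'Int.2
  have hGv : Gv < ⊤ := hv'Int.2
  set Mu' : ℝ≥0∞ := ENNReal.ofReal Mu with hMu'def
  set Mv' : ℝ≥0∞ := ENNReal.ofReal Mv with hMv'def
  have hcoeu : ∀ x, (‖u x‖₊ : ℝ≥0∞) ≤ Mu' := fun x => by
    rw [← enorm_eq_nnnorm, Real.enorm_eq_ofReal_abs]; exact ENNReal.ofReal_le_ofReal (hMu x)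
  have hcoev : ∀ x, (‖v x‖₊ : ℝ≥0∞) ≤ Mv' := fun x => by
    rw [← enorm_eq_nnnorm, Real.enorm_eq_ofReal_abs]; exact ENNReal.ofReal_le_ofReal (hMv x)
  -- first inner bound
  have hI1 : ∀ y ∈ Ioi (0:ℝ), ∫⁻ x in Ioi (0:ℝ), (‖u x * (v x - v (x + y))‖₊ : ℝ≥0∞)
      ≤ (Mu' * Gv + 2 * Mv' * Nu) * ENNReal.ofReal (min 1 y) := by
    intro y hy
    have hy' : (0:ℝ) < y := hy
    have hb1 : ∫⁻ x in Ioi (0:ℝ), (‖u x * (v x - v (x + y))‖₊ : ℝ≥0∞)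
        ≤ Mu' * (ENNReal.ofReal y * Gv) := by
      calc ∫⁻ x in Ioi (0:ℝ), (‖u x * (v x - v (x + y))‖₊ : ℝ≥0∞)
          ≤ ∫⁻ x in Ioi (0:ℝ), Mu' * (‖v (x + y) - v x‖₊ : ℝ≥0∞) := by
            refine lintegral_mono fun x => ?_
            rw [nnnorm_mul, ENNReal.coe_mul,
              show ‖v x - v (x + y)‖₊ = ‖v (x + y) - v x‖₊ by rw [← nnnorm_neg, neg_sub]]
            exact mul_le_mul' (hcoeu x) le_rfl
        _ = Mu' * ∫⁻ x in Ioi (0:ℝ), (‖v (x + y) - v x‖₊ : ℝ≥0∞) :=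
            lintegral_const_mul' _ _ ENNReal.ofReal_ne_top
        _ ≤ Mu' * (ENNReal.ofReal y * Gv) :=
            mul_le_mul' le_rfl (shift_bound v v' gv hgvm hgvae hvd hv'Int hy')
    have hb2 : ∫⁻ x in Ioi (0:ℝ), (‖u x * (v x - v (x + y))‖₊ : ℝ≥0∞)
        ≤ Nu * ENNReal.ofReal (2 * Mv) := by
      calc ∫⁻ x in Ioi (0:ℝ), (‖u x * (v x - v (x + y))‖₊ : ℝ≥0∞)
          ≤ ∫⁻ x in Ioi (0:ℝ), (‖u x‖₊ : ℝ≥0∞) * ENNReal.ofReal (2 * Mv) := by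
            refine lintegral_mono fun x => ?_
            rw [nnnorm_mul, ENNReal.coe_mul]
            refine mul_le_mul' le_rfl ?_
            rw [← enorm_eq_nnnorm, Real.enorm_eq_ofReal_abs]
            refine ENNReal.ofReal_le_ofReal ?_
            calc |v x - v (x + y)| ≤ |v x| + |v (x + y)| := abs_sub _ _
              _ ≤ Mv + Mv := add_le_add (hMv x) (hMv (x + y))
              _ = 2 * Mv := by ring
        _ = Nu * ENNReal.ofReal (2 * Mv) :=
            lintegral_mul_const' _ _ ENNReal.ofReal_ne_top
    rcases le_total y 1 with h1 | h1
    · rw [min_eq_right h1]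
      calc _ ≤ Mu' * (ENNReal.ofReal y * Gv) := hb1
        _ = (Mu' * Gv) * ENNReal.ofReal y := by ring
        _ ≤ (Mu' * Gv + 2 * Mv' * Nu) * ENNReal.ofReal y :=
            mul_le_mul' le_self_add le_rfl
    · rw [min_eq_left h1]
      calc _ ≤ Nu * ENNReal.ofReal (2 * Mv) := hb2
        _ = 2 * Mv' * Nu * ENNReal.ofReal 1 := by
            rw [ENNReal.ofReal_mul (by norm_num : (0:ℝ) ≤ 2), ENNReal.ofReal_one,
              ENNReal.ofReal_ofNat]
            ring
        _ ≤ (Mu' * Gv + 2 * Mv' * Nu) * ENNReal.ofReal 1 :=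
            mul_le_mul' le_add_self le_rfl
  -- second inner bound
  have hI2 : ∀ y ∈ Ioi (0:ℝ), ∫⁻ x in Ioi (0:ℝ), (‖(u x - u (x - y)) * v x‖₊ : ℝ≥0∞)
      ≤ (Mu' + Gu + 3 * Nu) * Mv' * ENNReal.ofReal (min 1 y) := by
    intro y hy
    have hy' : (0:ℝ) < y := hy
    have hstep : ∫⁻ x in Ioi (0:ℝ), (‖(u x - u (x - y)) * v x‖₊ : ℝ≥0∞)
        ≤ (∫⁻ x in Ioi (0:ℝ), (‖u x - u (x - y)‖₊ : ℝ≥0∞)) * Mv' := by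
      calc ∫⁻ x in Ioi (0:ℝ), (‖(u x - u (x - y)) * v x‖₊ : ℝ≥0∞)
          ≤ ∫⁻ x in Ioi (0:ℝ), (‖u x - u (x - y)‖₊ : ℝ≥0∞) * Mv' := by
            refine lintegral_mono fun x => ?_
            rw [nnnorm_mul, ENNReal.coe_mul]
            exact mul_le_mul' le_rfl (hcoev x)
        _ = _ := lintegral_mul_const' _ _ ENNReal.ofReal_ne_top
    have hsplit : ∫⁻ x in Ioi (0:ℝ), (‖u x - u (x - y)‖₊ : ℝ≥0∞)
        = (∫⁻ x in Ioc (0:ℝ) y, (‖u x‖₊ : ℝ≥0∞))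
          + ∫⁻ z in Ioi (0:ℝ), (‖u (z + y) - u z‖₊ : ℝ≥0∞) := by
      calc ∫⁻ x in Ioi (0:ℝ), (‖u x - u (x - y)‖₊ : ℝ≥0∞)
          = ∫⁻ x in Ioc (0:ℝ) y ∪ Ioi y, (‖u x - u (x - y)‖₊ : ℝ≥0∞) := by
            rw [Ioc_union_Ioi_eq_Ioi hy'.le]
        _ = (∫⁻ x in Ioc (0:ℝ) y, (‖u x - u (x - y)‖₊ : ℝ≥0∞))
            + ∫⁻ x in Ioi y, (‖u x - u (x - y)‖₊ : ℝ≥0∞) :=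
            lintegral_union measurableSet_Ioi (Ioc_disjoint_Ioi le_rfl)
        _ = _ := by
            congr 1
            · refine setLIntegral_congr_fun measurableSet_Ioc (fun x hx => ?_)
              rw [hu0 (x - y) (by linarith [hx.2]), sub_zero]
            · rw [lint_shift (fun x => (‖u x - u (x - y)‖₊ : ℝ≥0∞)) y]
              refine setLIntegral_congr_fun measurableSet_Ioi (fun z _ => ?_)
              rw [add_sub_cancel_right]
    have hJ1a : ∫⁻ x in Ioc (0:ℝ) y, (‖u x‖₊ : ℝ≥0∞) ≤ Mu' * ENNReal.ofReal y := by
      calc ∫⁻ x in Ioc (0:ℝ) y, (‖u x‖₊ : ℝ≥0∞) ≤ ∫⁻ _ in Ioc (0:ℝ) y, Mu' :=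
          lintegral_mono fun x => hcoeu x
        _ = Mu' * volume (Ioc (0:ℝ) y) := setLIntegral_const _ _
        _ = Mu' * ENNReal.ofReal y := by rw [Real.volume_Ioc, sub_zero]
    have hJ1b : ∫⁻ x in Ioc (0:ℝ) y, (‖u x‖₊ : ℝ≥0∞) ≤ Nu :=
      lintegral_mono_set fun x hx => hx.1
    have hJ2a : ∫⁻ z in Ioi (0:ℝ), (‖u (z + y) - u z‖₊ : ℝ≥0∞) ≤ ENNReal.ofReal y * Gu :=
      shift_bound u u' gu hgum hguae hud hu'Int hy'
    have hJ2b : ∫⁻ z in Ioi (0:ℝ), (‖u (z + y) - u z‖₊ : ℝ≥0∞) ≤ Nu + Nu := by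
      calc ∫⁻ z in Ioi (0:ℝ), (‖u (z + y) - u z‖₊ : ℝ≥0∞)
          ≤ ∫⁻ z in Ioi (0:ℝ), ((‖u (z + y)‖₊ : ℝ≥0∞) + (‖u z‖₊ : ℝ≥0∞)) := by
            refine lintegral_mono fun z => ?_
            exact ENNReal.coe_le_coe.mpr (nnnorm_sub_le _ _)
        _ = (∫⁻ z in Ioi (0:ℝ), (‖u (z + y)‖₊ : ℝ≥0∞)) + ∫⁻ z in Ioi (0:ℝ), (‖u z‖₊ : ℝ≥0∞) :=
            lintegral_add_left ((hum.comp (measurable_id.add_const y)).nnnorm.coe_nnreal_ennreal) _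
        _ ≤ Nu + Nu := by
            refine add_le_add ?_ le_rfl
            rw [← lint_shift (fun x => (‖u x‖₊ : ℝ≥0∞)) y]
            exact lintegral_mono_set fun x hx => lt_trans hy' hx
    rcases le_total y 1 with h1 | h1
    · rw [min_eq_right h1]
      calc ∫⁻ x in Ioi (0:ℝ), (‖(u x - u (x - y)) * v x‖₊ : ℝ≥0∞)
          ≤ (∫⁻ x in Ioi (0:ℝ), (‖u x - u (x - y)‖₊ : ℝ≥0∞)) * Mv' := hstep
        _ ≤ (Mu' * ENNReal.ofReal y + ENNReal.ofReal y * Gu) * Mv' := by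
            rw [hsplit]; exact mul_le_mul' (add_le_add hJ1a hJ2a) le_rfl
        _ = (Mu' + Gu) * Mv' * ENNReal.ofReal y := by ring
        _ ≤ (Mu' + Gu + 3 * Nu) * Mv' * ENNReal.ofReal y := by
            exact mul_le_mul' (mul_le_mul' le_self_add le_rfl) le_rfl
    · rw [min_eq_left h1, ENNReal.ofReal_one, mul_one]
      calc ∫⁻ x in Ioi (0:ℝ), (‖(u x - u (x - y)) * v x‖₊ : ℝ≥0∞)
          ≤ (∫⁻ x in Ioi (0:ℝ), (‖u x - u (x - y)‖₊ : ℝ≥0∞)) * Mv' := hstep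
        _ ≤ (Nu + (Nu + Nu)) * Mv' := by
            rw [hsplit]; exact mul_le_mul' (add_le_add hJ1b hJ2b) le_rfl
        _ = 3 * Nu * Mv' := by ring
        _ ≤ (Mu' + Gu + 3 * Nu) * Mv' := mul_le_mul' le_add_self le_rfl
  -- finiteness of μ on Ioi a
  have hfin : ∀ a : ℝ, 0 < a → μ (Ioi a) < ⊤ := by
    intro a ha
    have hmin : (0:ℝ) < min 1 a := lt_min one_pos ha
    have h1 : ENNReal.ofReal (min 1 a) * μ (Ioi a)
        ≤ ∫⁻ z in Ioi a, ENNReal.ofReal (min 1 z) ∂μ := by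
      rw [← setLIntegral_const (Ioi a) (ENNReal.ofReal (min 1 a))]
      refine lintegral_mono_ae ((ae_restrict_iff' measurableSet_Ioi).2
        (ae_of_all _ fun z hz => ?_))
      exact ENNReal.ofReal_le_ofReal (min_le_min le_rfl (le_of_lt hz))
    have h2 : ∫⁻ z in Ioi a, ENNReal.ofReal (min 1 z) ∂μ
        ≤ ∫⁻ z in Ioi (0:ℝ), ENNReal.ofReal (min 1 z) ∂μ :=
      lintegral_mono_set fun x hx => lt_trans ha hx
    have h3 : ENNReal.ofReal (min 1 a) * μ (Ioi a) < ⊤ := lt_of_le_of_lt (h1.trans h2) hμ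
    by_contra htop
    rw [not_lt, top_le_iff] at htop
    rw [htop, ENNReal.mul_top (ENNReal.ofReal_pos.mpr hmin).ne'] at h3
    exact (lt_irrefl _) h3
  -- sigma-finiteness of the restricted measure
  haveI hsf : SigmaFinite (μ.restrict (Ioi (0:ℝ))) := by
    refine Measure.sigmaFinite_of_countable
      (countable_range fun n : ℕ => Ioi ((1:ℝ)/(n+1)) ∪ Iic 0) ?_ ?_
    · rintro s ⟨n, rfl⟩
      have hpos : (0:ℝ) < 1/(n+1) := by positivity
      calc μ.restrict (Ioi 0) (Ioi ((1:ℝ)/(n+1)) ∪ Iic 0)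
          = μ ((Ioi ((1:ℝ)/(n+1)) ∪ Iic 0) ∩ Ioi 0) := Measure.restrict_apply' measurableSet_Ioi
        _ ≤ μ (Ioi ((1:ℝ)/(n+1))) := by
            refine measure_mono ?_
            rintro x ⟨hx1 | hx1, hx2⟩
            · exact hx1
            · exact absurd (Set.mem_Ioi.mp hx2) (not_lt.mpr hx1)
        _ < ⊤ := hfin _ hpos
    · apply eq_univ_of_forall
      intro x
      rcases le_or_gt x 0 with hx | hx
      · exact ⟨_, ⟨0, rfl⟩, Or.inr hx⟩
      · obtain ⟨n, hn⟩ := exists_nat_one_div_lt hx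
        exact ⟨_, ⟨n, rfl⟩, Or.inl hn⟩
  -- finiteness of the constants
  have hC1 : (Mu' * Gv + 2 * Mv' * Nu) < ⊤ := by
    refine ENNReal.add_lt_top.mpr ⟨?_, ?_⟩
    · exact ENNReal.mul_lt_top ENNReal.ofReal_lt_top hGv
    · exact ENNReal.mul_lt_top (ENNReal.mul_lt_top (by norm_num) ENNReal.ofReal_lt_top) hNu
  have hC2 : (Mu' + Gu + 3 * Nu) * Mv' < ⊤ := by
    refine ENNReal.mul_lt_top ?_ ENNReal.ofReal_lt_top
    refine ENNReal.add_lt_top.mpr ⟨ENNReal.add_lt_top.mpr ⟨ENNReal.ofReal_lt_top, hGu⟩, ?_⟩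
    exact ENNReal.mul_lt_top (by norm_num) hNu
  -- product integrability
  have hmeasmin : Measurable fun y : ℝ => ENNReal.ofReal (min 1 y) :=
    (measurable_const.min measurable_id).ennreal_ofReal
  have hprod1 : Integrable (Function.uncurry fun x y => u x * (v x - v (x + y)))
      ((volume.restrict (Ioi 0)).prod (μ.restrict (Ioi 0))) := by
    have hm : Measurable fun p : ℝ × ℝ => u p.1 * (v p.1 - v (p.1 + p.2)) :=
      (hum.comp measurable_fst).mul
        ((hvm.comp measurable_fst).sub (hvm.comp (measurable_fst.add measurable_snd)))
    refine ⟨hm.aestronglyMeasurable, ?_⟩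
    refine lt_of_eq_of_lt (lintegral_prod_symm
      (fun p : ℝ × ℝ => (‖u p.1 * (v p.1 - v (p.1 + p.2))‖₊ : ℝ≥0∞))
      hm.enorm.aemeasurable) ?_
    calc ∫⁻ y in Ioi (0:ℝ), ∫⁻ x in Ioi (0:ℝ), (‖u x * (v x - v (x + y))‖₊ : ℝ≥0∞) ∂volume ∂μ
        ≤ ∫⁻ y in Ioi (0:ℝ), (Mu' * Gv + 2 * Mv' * Nu) * ENNReal.ofReal (min 1 y) ∂μ :=
          lintegral_mono_ae ((ae_restrict_iff' measurableSet_Ioi).2 (ae_of_all _ hI1))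
      _ = (Mu' * Gv + 2 * Mv' * Nu) * ∫⁻ y in Ioi (0:ℝ), ENNReal.ofReal (min 1 y) ∂μ :=
          lintegral_const_mul _ hmeasmin
      _ < ⊤ := ENNReal.mul_lt_top hC1 hμ
  have hprod2 : Integrable (Function.uncurry fun x y => (u x - u (x - y)) * v x)
      ((volume.restrict (Ioi 0)).prod (μ.restrict (Ioi 0))) := by
    have hm : Measurable fun p : ℝ × ℝ => (u p.1 - u (p.1 - p.2)) * v p.1 :=
      ((hum.comp measurable_fst).sub (hum.comp (measurable_fst.sub measurable_snd))).mul
        (hvm.comp measurable_fst)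
    refine ⟨hm.aestronglyMeasurable, ?_⟩
    refine lt_of_eq_of_lt (lintegral_prod_symm
      (fun p : ℝ × ℝ => (‖(u p.1 - u (p.1 - p.2)) * v p.1‖₊ : ℝ≥0∞))
      hm.enorm.aemeasurable) ?_
    calc ∫⁻ y in Ioi (0:ℝ), ∫⁻ x in Ioi (0:ℝ), (‖(u x - u (x - y)) * v x‖₊ : ℝ≥0∞) ∂volume ∂μ
        ≤ ∫⁻ y in Ioi (0:ℝ), (Mu' + Gu + 3 * Nu) * Mv' * ENNReal.ofReal (min 1 y) ∂μ :=
          lintegral_mono_ae ((ae_restrict_iff' measurableSet_Ioi).2 (ae_of_all _ hI2))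
      _ = (Mu' + Gu + 3 * Nu) * Mv' * ∫⁻ y in Ioi (0:ℝ), ENNReal.ofReal (min 1 y) ∂μ :=
          lintegral_const_mul _ hmeasmin
      _ < ⊤ := ENNReal.mul_lt_top hC2 hμ
  -- final chain
  calc ∫ x in Ioi (0:ℝ), u x * (∫ y in Ioi (0:ℝ), (v x - v (x + y)) ∂μ)
      = ∫ x in Ioi (0:ℝ), ∫ y in Ioi (0:ℝ), u x * (v x - v (x + y)) ∂μ := by
        simp_rw [integral_const_mul]
    _ = ∫ y in Ioi (0:ℝ), ∫ x in Ioi (0:ℝ), u x * (v x - v (x + y)) ∂volume ∂μ :=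
        integral_integral_swap hprod1
    _ = ∫ y in Ioi (0:ℝ), ∫ x in Ioi (0:ℝ), (u x - u (x - y)) * v x ∂volume ∂μ := by
        refine integral_congr_ae ((ae_restrict_iff' measurableSet_Ioi).2
          (ae_of_all _ fun y hy => ?_))
        exact shift_eq u v hu0 hv0 hum hvm huInt hvInt Mu Mv hMu hMv hy
    _ = ∫ x in Ioi (0:ℝ), ∫ y in Ioi (0:ℝ), (u x - u (x - y)) * v x ∂μ :=
        (integral_integral_swap hprod2).symm
    _ = ∫ x in Ioi (0:ℝ), (∫ y in Ioi (0:ℝ), (u x - u (x - y)) ∂μ) * v x := by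
        simp_rw [integral_mul_const]
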